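/- For all odd n ≥ 3 and all q ∈ (0,1), it holds that 2^{n-2}·(Φ_q(g_n) - Φ_q(Maj_n)) = (1-2q)·Pr[z = z'] + q^n - (1-q)^n, where z and z' are independent Binomial((n-1)/2, q) random variables. -/

import Mathlib

open Finset

noncomputable def chi (b : Bool) : ℝ := if b then 1 else -1

noncomputable def maj (n : ℕ) (x : Fin n → Bool) : ℝ :=
  Real.sign (∑ i, chi (x i))

def eVec (n : ℕ) : Fin n → Bool := fun i => decide ((i : ℕ) < (n - 1) / 2 + 1)

noncomputable def gfun (n : ℕ) (x : Fin n → Bool) : ℝ :=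
  if x = eVec n ∨ x = (fun i => !(eVec n i)) then - maj n x else maj n x

noncomputable def stab (n : ℕ) (ρ : ℝ) (f : (Fin n → Bool) → ℝ) : ℝ :=
  (1 / 2 ^ n) * ∑ x : Fin n → Bool, ∑ z : Fin n → Bool,
    (∏ i, if z i then (1 - ρ) / 2 else (1 + ρ) / 2) * (f x * f (fun i => xor (x i) (z i)))

noncomputable def phi (n : ℕ) (p : ℝ) (f : (Fin n → Bool) → ℝ) : ℝ :=
  ∑ s : Fin n → Bool, (∏ i, if s i then p else 1 - p) *
    ((1 / 2 ^ n) * ∑ x : Fin n → Bool,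
      |(1 / 2 ^ n) * ∑ z : Fin n → Bool, f (fun i => if s i then x i else z i)|)

noncomputable def binomPMF (m : ℕ) (q : ℝ) (k : ℕ) : ℝ :=
  (m.choose k : ℝ) * q ^ k * (1 - q) ^ (m - k)

noncomputable def binomCollision (m : ℕ) (q : ℝ) : ℝ :=
  ∑ k ∈ Finset.range (m + 1), (binomPMF m q k) ^ 2



def isgn (t : ℤ) : ℤ := if 0 < t then 1 else if t < 0 then -1 else 0

lemma real_sign_intCast (k : ℤ) : Real.sign (k : ℝ) = (isgn k : ℝ) := by
  rcases lt_trichotomy k 0 with h | h | h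
  · rw [Real.sign_of_neg (by exact_mod_cast h)]; simp [isgn, h, not_lt.2 h.le]
  · simp [h, isgn, Real.sign_zero]
  · rw [Real.sign_of_pos (by exact_mod_cast h)]; simp [isgn, h, not_lt.2 h.le]

lemma isgn_neg (t : ℤ) : isgn (-t) = - isgn t := by
  rcases lt_trichotomy t 0 with h | h | h <;> simp_all [isgn] <;> omega

def ichi (b : Bool) : ℤ := if b then 1 else -1

noncomputable def Efun (m : ℕ) (d : ℤ) : ℤ :=
  ∑ z : Fin m → Bool, isgn (d + ∑ i, ichi (z i))

lemma Efun_zero (d : ℤ) : Efun 0 d = isgn d := by simp [Efun]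

def notEquiv : Bool ≃ Bool := ⟨not, not, by intro b; simp, by intro b; simp⟩

lemma Efun_succ (m : ℕ) (d : ℤ) : Efun (m+1) d = Efun m (d+1) + Efun m (d-1) := by
  have H := Fintype.sum_equiv (Fin.consEquiv (n := m) (fun _ => Bool)).symm
    (fun z => isgn (d + ∑ i, ichi (z i)))
    (fun p => isgn (d + (ichi p.1 + ∑ i, ichi (p.2 i))))
    (by intro z; simp [Fin.sum_univ_succ, Fin.consEquiv, Fin.tail])
  rw [Efun, H, Fintype.sum_prod_type, Fintype.sum_bool, Efun, Efun]
  congr 1 <;>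
  · apply Finset.sum_congr rfl; intro z _; congr 1; simp [ichi]; ring

lemma Efun_antisym (m : ℕ) (d : ℤ) : Efun m (-d) = - Efun m d := by
  rw [Efun, Efun, ← Finset.sum_neg_distrib]
  apply Fintype.sum_equiv (Equiv.arrowCongr (Equiv.refl (Fin m)) notEquiv)
  intro z
  have h1 : ∑ i, ichi (!(z i)) = - ∑ i, ichi (z i) := by
    rw [← Finset.sum_neg_distrib]; apply Finset.sum_congr rfl; intro i _
    cases z i <;> simp [ichi]
  have h2 : isgn (-d + ∑ i, ichi (z i)) = - isgn (d + ∑ i, ichi (!(z i))) := by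
    rw [h1, ← isgn_neg]; congr 1; ring
  simpa [notEquiv, Equiv.arrowCongr] using h2

lemma Efun_zero_arg (m : ℕ) : Efun m 0 = 0 := by
  have h := Efun_antisym m 0
  simp at h; omega

lemma Efun_pos (m : ℕ) (d : ℤ) (hd : 1 ≤ d) : 0 < Efun m d := by
  induction m generalizing d with
  | zero => simp [Efun_zero, isgn]; omega
  | succ m ih =>
    rw [Efun_succ]
    rcases eq_or_lt_of_le hd with h | h
    · rw [← h]; norm_num [Efun_zero_arg]; exact ih 2 (by norm_num)
    · have h1 : 0 < Efun m (d+1) := ih _ (by omega)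
      have h2 : 0 < Efun m (d-1) := ih _ (by omega)
      omega

lemma Efun_even (m : ℕ) (d : ℤ) (hm : 1 ≤ m) (hpar : Odd (d + m)) : Even (Efun m d) := by
  induction m generalizing d with
  | zero => omega
  | succ m ih =>
    rcases Nat.eq_zero_or_pos m with h | h
    · subst h
      have hd : Even d := by
        rcases hpar with ⟨k, hk⟩; push_cast at hk; exact ⟨k, by omega⟩
      rw [show (0:ℕ)+1 = 0 + 1 by rfl, Efun_succ, Efun_zero, Efun_zero, Int.even_iff]
      rcases hd with ⟨k, hk⟩
      unfold isgn; split_ifs <;> omega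
    · rw [Efun_succ]
      have p1 : Odd ((d+1) + (m:ℤ)) := by rcases hpar with ⟨k,hk⟩; push_cast at hk ⊢; exact ⟨k, by omega⟩
      have p2 : Odd ((d-1) + (m:ℤ)) := by rcases hpar with ⟨k,hk⟩; push_cast at hk ⊢; exact ⟨k-1, by omega⟩
      exact (ih _ h p1).add (ih _ h p2)

lemma Efun_neg (m : ℕ) (d : ℤ) (hd : d ≤ -1) : Efun m d < 0 := by
  have := Efun_pos m (-d) (by omega)
  have h2 := Efun_antisym m d
  omega

-- key abs lemma
lemma abs_key (E : ℤ) (hE : Even E) (c : ℝ) (hc : 0 < c) :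
    |c * E - 2 * c| - |c * E| = if E ≤ 0 then 2 * c else -(2 * c) := by
  have h2 : c * (E:ℝ) - 2 * c = c * ((E:ℝ) - 2) := by ring
  rcases le_or_gt E 0 with h | h
  · have hE0 : (E:ℝ) ≤ 0 := by exact_mod_cast h
    rw [if_pos h, h2, abs_mul, abs_of_pos hc, abs_of_nonpos (by linarith), abs_of_nonpos (by nlinarith)]
    ring
  · have h2' : 2 ≤ E := by rcases hE with ⟨k,hk⟩; omega
    have hE2 : (2:ℝ) ≤ (E:ℝ) := by exact_mod_cast h2'
    rw [if_neg (by omega), h2, abs_mul, abs_of_pos hc, abs_of_nonneg (by linarith), abs_of_nonneg (by nlinarith)]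
    ring

lemma chi_eq (b : Bool) : chi b = ((ichi b : ℤ) : ℝ) := by cases b <;> simp [chi, ichi]

lemma ichi_not (b : Bool) : ichi (!b) = - ichi b := by cases b <;> simp [ichi]

lemma maj_eq (n : ℕ) (x : Fin n → Bool) : maj n x = ((isgn (∑ i, ichi (x i)) : ℤ) : ℝ) := by
  rw [maj, show (∑ i, chi (x i)) = (((∑ i, ichi (x i)) : ℤ) : ℝ) by push_cast [chi_eq]; rfl,
    real_sign_intCast]

lemma odd_isum (n : ℕ) (hodd : Odd n) (x : Fin n → Bool) : Odd (∑ i, ichi (x i)) := by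
  obtain ⟨k, hk⟩ := hodd
  have h1 : (∑ i, ichi (x i)) % 2 = 1 := by
    rw [Finset.sum_int_mod]
    have : ∀ i ∈ (univ : Finset (Fin n)), ichi (x i) % 2 = 1 := by
      intro i _; cases x i <;> simp [ichi]
    rw [Finset.sum_congr rfl this]
    simp
    omega
  rw [Int.odd_iff]; exact h1

lemma isum_eVec (n : ℕ) (hodd : Odd n) (hn : 3 ≤ n) : ∑ i, ichi (eVec n i) = 1 := by
  obtain ⟨h, hh⟩ := hodd
  have hdiv : (n - 1) / 2 = h := by omega
  have step : ∀ i : Fin n, ichi (eVec n i) = (fun j => if j < h + 1 then (1:ℤ) else -1) (i : ℕ) := by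
    intro i; simp [eVec, ichi, hdiv]
  calc ∑ i, ichi (eVec n i)
      = ∑ i : Fin n, (fun j => if j < h + 1 then (1:ℤ) else -1) (i : ℕ) :=
        Finset.sum_congr rfl (fun i _ => step i)
    _ = ∑ j ∈ Finset.range n, (fun j => if j < h + 1 then (1:ℤ) else -1) j :=
        by exact Fin.sum_univ_eq_sum_range (fun j => if j < h + 1 then (1:ℤ) else -1) n
    _ = ∑ j ∈ Finset.Ico 0 (h+1), (fun j => if j < h + 1 then (1:ℤ) else -1) j
        + ∑ j ∈ Finset.Ico (h+1) n, (fun j => if j < h + 1 then (1:ℤ) else -1) j := by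
        rw [Finset.range_eq_Ico,
          ← Finset.sum_Ico_consecutive _ (Nat.zero_le (h+1)) (by omega : h + 1 ≤ n)]
    _ = ∑ j ∈ Finset.Ico 0 (h+1), (1:ℤ) + ∑ j ∈ Finset.Ico (h+1) n, (-1:ℤ) := by
        congr 1
        · exact Finset.sum_congr rfl (fun j hj => by simp at hj; simp [hj])
        · exact Finset.sum_congr rfl (fun j hj => by simp at hj; simp; omega)
    _ = 1 := by
        simp [Nat.card_Ico]
        omega

lemma ind_forall_prod {α : Type*} [Fintype α] (P : α → Prop) [DecidablePred P] :
    (if (∀ i, P i) then (1:ℝ) else 0) = ∏ i, if P i then 1 else 0 := by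
  by_cases h : ∀ i, P i
  · rw [if_pos h]; symm; apply Finset.prod_eq_one; intro i _; rw [if_pos (h i)]
  · push_neg at h; obtain ⟨i₀, hi⟩ := h
    rw [if_neg (by push_neg; exact ⟨i₀, hi⟩)]
    symm; apply Finset.prod_eq_zero (Finset.mem_univ i₀); rw [if_neg hi]

lemma prod_ite_two (n : ℕ) (s : Fin n → Bool) :
    (∏ i, if s i = true then (2:ℝ) else 1) = 2 ^ ((univ.filter (fun i => s i = true)).card) := by
  rw [← Finset.prod_filter_mul_prod_filter_not univ (fun i => s i = true)]
  have h1 : ∏ i ∈ univ.filter (fun i => s i = true), (if s i = true then (2:ℝ) else 1)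
      = ∏ _i ∈ univ.filter (fun i => s i = true), (2:ℝ) :=
    Finset.prod_congr rfl (fun i hi => by simp at hi; simp [hi])
  have h2 : ∏ i ∈ univ.filter (fun i => ¬ (s i = true)), (if s i = true then (2:ℝ) else 1)
      = ∏ _i ∈ univ.filter (fun i => ¬ (s i = true)), (1:ℝ) :=
    Finset.prod_congr rfl (fun i hi => by simp at hi; simp [hi])
  rw [h1, h2]
  simp

lemma count_sel (n : ℕ) (s x y : Fin n → Bool) :
    (∑ z : Fin n → Bool, if (fun i => if s i then x i else z i) = y then (1:ℝ) else 0)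
      = if (∀ i, s i = true → x i = y i) then 2 ^ ((univ.filter (fun i => s i = true)).card) else 0 := by
  have step1 : ∀ z : Fin n → Bool,
      (if (fun i => if s i then x i else z i) = y then (1:ℝ) else 0)
        = ∏ i, if (if s i then x i else z i) = y i then (1:ℝ) else 0 := by
    intro z
    rw [← ind_forall_prod]
    congr 1
    simp [funext_iff]
  rw [Finset.sum_congr rfl (fun z _ => step1 z)]
  have step2 : (∑ z ∈ Fintype.piFinset (fun _ : Fin n => (univ : Finset Bool)),
      ∏ i, if (if s i then x i else z i) = y i then (1:ℝ) else 0)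
      = ∏ i, ∑ b : Bool, if (if s i then x i else b) = y i then (1:ℝ) else 0 :=
    (Finset.prod_univ_sum (fun _ : Fin n => (univ : Finset Bool))
      (fun i b => if (if s i then x i else b) = y i then (1:ℝ) else 0)).symm
  rw [show (univ : Finset (Fin n → Bool)) = Fintype.piFinset (fun _ => univ) from
        (Fintype.piFinset_univ).symm, step2]
  have step3 : ∀ i, (∑ b : Bool, if (if s i then x i else b) = y i then (1:ℝ) else 0)
      = if s i = true then (if x i = y i then 2 else 0) else 1 := by
    intro i
    rw [Fintype.sum_bool]
    cases hs : s i
    · cases hy : y i <;> simp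
    · by_cases hxy : x i = y i <;> simp [hxy] <;> norm_num
  rw [Finset.prod_congr rfl (fun i _ => step3 i)]
  by_cases hagr : ∀ i, s i = true → x i = y i
  · rw [if_pos hagr, ← prod_ite_two n s]
    apply Finset.prod_congr rfl
    intro i _
    cases hs : s i
    · simp
    · simp [hagr i hs]
  · rw [if_neg hagr]
    push_neg at hagr
    obtain ⟨i₀, hs, hxy⟩ := hagr
    apply Finset.prod_eq_zero (Finset.mem_univ i₀)
    simp [hs, hxy]

lemma isum_sel (n : ℕ) (s x z : Fin n → Bool) :
    ∑ i, ichi (if s i then x i else z i)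
      = (∑ i ∈ univ.filter (fun i => s i = true), ichi (x i))
        + ∑ i ∈ univ.filter (fun i => ¬ (s i = true)), ichi (z i) := by
  rw [← Finset.sum_filter_add_sum_filter_not univ (fun i => s i = true)]
  congr 1 <;> (apply Finset.sum_congr rfl; intro i hi; simp at hi; simp [hi])

lemma sum_isgn_pi (α : Type*) [Fintype α] [DecidableEq α] (c : ℤ) :
    ∑ v : α → Bool, isgn (c + ∑ i, ichi (v i)) = Efun (Fintype.card α) c := by
  rw [Efun]
  apply Fintype.sum_equiv (Equiv.arrowCongr (Fintype.equivFin α) (Equiv.refl Bool))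
  intro v
  have h : ∑ j, ichi (((Equiv.arrowCongr (Fintype.equivFin α) (Equiv.refl Bool)) v) j)
      = ∑ i, ichi (v i) := Equiv.sum_comp (Fintype.equivFin α).symm (fun i => ichi (v i))
  exact (congrArg isgn (congrArg (c + ·) h)).symm

lemma sum_maj_sel (n : ℕ) (s x : Fin n → Bool) :
    (∑ z : Fin n → Bool, maj n (fun i => if s i then x i else z i))
      = 2 ^ ((univ.filter (fun i => s i = true)).card)
        * ((Efun (Fintype.card {i : Fin n // ¬ (s i = true)})
            (∑ i ∈ univ.filter (fun i => s i = true), ichi (x i)) : ℤ) : ℝ) := by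
  set c := ∑ i ∈ univ.filter (fun i => s i = true), ichi (x i) with hc
  have step1 : ∀ z : Fin n → Bool,
      maj n (fun i => if s i then x i else z i)
        = ((isgn (c + ∑ i : {i : Fin n // ¬ (s i = true)}, ichi (z i)) : ℤ) : ℝ) := by
    intro z
    rw [maj_eq]
    congr 2
    rw [isum_sel n s x z, hc]
    congr 1
    exact (Finset.sum_subtype _ (by intro i; simp) (fun i => ichi (z i)))
  rw [Finset.sum_congr rfl (fun z _ => step1 z), ← Int.cast_sum]
  have key : (∑ z : Fin n → Bool, isgn (c + ∑ i : {i : Fin n // ¬ (s i = true)}, ichi (z i)))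
      = 2 ^ ((univ.filter (fun i => s i = true)).card)
        * Efun (Fintype.card {i : Fin n // ¬ (s i = true)}) c := by
    rw [Fintype.sum_equiv (Equiv.piEquivPiSubtypeProd (fun i => s i = true) (fun _ => Bool))
      _ (fun p => isgn (c + ∑ i : {i : Fin n // ¬ (s i = true)}, ichi (p.2 i)))
      (by intro z; rfl)]
    rw [Fintype.sum_prod_type, Finset.sum_congr rfl
      (fun u _ => sum_isgn_pi {i : Fin n // ¬ (s i = true)} c)]
    rw [Finset.sum_const, Finset.card_univ, Fintype.card_fun, Fintype.card_subtype,
      Fintype.card_bool, nsmul_eq_mul]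
    push_cast
    ring
  rw [key]
  push_cast
  ring

lemma maj_eVec (n : ℕ) (hodd : Odd n) (hn : 3 ≤ n) : maj n (eVec n) = 1 := by
  rw [maj_eq, isum_eVec n hodd hn]; simp [isgn]

lemma isum_not (n : ℕ) (x : Fin n → Bool) : ∑ i, ichi (!(x i)) = - ∑ i, ichi (x i) := by
  rw [← Finset.sum_neg_distrib]
  exact Finset.sum_congr rfl (fun i _ => ichi_not (x i))

lemma maj_notE (n : ℕ) (hodd : Odd n) (hn : 3 ≤ n) : maj n (fun i => !(eVec n i)) = -1 := by
  rw [maj_eq]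
  rw [show (∑ i, ichi ((fun i => !(eVec n i)) i)) = -1 by rw [isum_not n (eVec n), isum_eVec n hodd hn]]
  simp [isgn]

lemma eVec_ne (n : ℕ) (hn : 3 ≤ n) : eVec n ≠ (fun i => !(eVec n i)) := by
  intro hcontra
  have h0 : (0:ℕ) < n := by omega
  have := congrFun hcontra ⟨0, h0⟩
  simp [eVec] at this

lemma gfun_eq (n : ℕ) (hodd : Odd n) (hn : 3 ≤ n) (y : Fin n → Bool) :
    gfun n y = maj n y + ((if y = eVec n then (-2:ℝ) else 0)
      + (if y = (fun i => !(eVec n i)) then 2 else 0)) := by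
  rw [gfun]
  by_cases h1 : y = eVec n
  · subst h1
    rw [if_pos (Or.inl rfl), if_pos rfl, if_neg (eVec_ne n hn), maj_eVec n hodd hn]
    norm_num
  · by_cases h2 : y = (fun i => !(eVec n i))
    · subst h2
      rw [if_pos (Or.inr rfl), if_neg (Ne.symm (eVec_ne n hn)), if_pos rfl,
        maj_notE n hodd hn]
      norm_num
    · rw [if_neg (by tauto), if_neg h1, if_neg h2]; ring

lemma gsum_eq (n : ℕ) (hodd : Odd n) (hn : 3 ≤ n) (s x : Fin n → Bool) :
    (∑ z : Fin n → Bool, gfun n (fun i => if s i then x i else z i))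
      = (∑ z : Fin n → Bool, maj n (fun i => if s i then x i else z i))
        + (-2) * (if (∀ i, s i = true → x i = eVec n i) then
            (2:ℝ) ^ ((univ.filter (fun i => s i = true)).card) else 0)
        + 2 * (if (∀ i, s i = true → x i = !(eVec n i)) then
            (2:ℝ) ^ ((univ.filter (fun i => s i = true)).card) else 0) := by
  have e1 : ∀ (y : Fin n → Bool) (a : ℝ),
      (∑ z : Fin n → Bool, if (fun i => if s i then x i else z i) = y then a else 0)
        = a * (if (∀ i, s i = true → x i = y i) then
            (2:ℝ) ^ ((univ.filter (fun i => s i = true)).card) else 0) := by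
    intro y a
    rw [← count_sel n s x y, Finset.mul_sum]
    apply Finset.sum_congr rfl; intro z _; split_ifs <;> ring
  rw [Finset.sum_congr rfl (fun z _ => gfun_eq n hodd hn (fun i => if s i then x i else z i))]
  rw [Finset.sum_add_distrib, Finset.sum_add_distrib]
  rw [show (∑ z : Fin n → Bool, if (fun i => if s i then x i else z i) = eVec n then (-2:ℝ) else 0)
      = (-2) * (if (∀ i, s i = true → x i = eVec n i) then
          (2:ℝ) ^ ((univ.filter (fun i => s i = true)).card) else 0) from e1 (eVec n) (-2)]
  rw [show (∑ z : Fin n → Bool, if (fun i => if s i then x i else z i) = (fun i => !(eVec n i)) then (2:ℝ) else 0)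
      = 2 * (if (∀ i, s i = true → x i = !(eVec n i)) then
          (2:ℝ) ^ ((univ.filter (fun i => s i = true)).card) else 0) from e1 _ 2]
  ring

lemma count_agree (n : ℕ) (s y : Fin n → Bool) :
    (∑ x : Fin n → Bool, if (∀ i, s i = true → x i = y i) then (1:ℝ) else 0)
      = 2 ^ ((univ.filter (fun i => ¬ (s i = true))).card) := by
  have step1 : ∀ x : Fin n → Bool,
      (if (∀ i, s i = true → x i = y i) then (1:ℝ) else 0)
        = ∏ i, if (s i = true → x i = y i) then (1:ℝ) else 0 := by
    intro x
    by_cases h : ∀ i, s i = true → x i = y i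
    · rw [if_pos h]; symm; apply Finset.prod_eq_one; intro i _; rw [if_pos (h i)]
    · rw [if_neg h]
      push_neg at h; obtain ⟨i₀, h1, h2⟩ := h
      symm; apply Finset.prod_eq_zero (Finset.mem_univ i₀); rw [if_neg (by tauto)]
  rw [Finset.sum_congr rfl (fun x _ => step1 x)]
  rw [show (univ : Finset (Fin n → Bool)) = Fintype.piFinset (fun _ => univ) from
        (Fintype.piFinset_univ).symm]
  rw [← Finset.prod_univ_sum (fun _ : Fin n => (univ : Finset Bool))
      (fun i b => if (s i = true → b = y i) then (1:ℝ) else 0)]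
  have step3 : ∀ i, (∑ b : Bool, if (s i = true → b = y i) then (1:ℝ) else 0)
      = if s i = true then 1 else 2 := by
    intro i
    rw [Fintype.sum_bool]
    cases hs : s i
    · simp; norm_num
    · cases hy : y i <;> simp
  rw [Finset.prod_congr rfl (fun i _ => step3 i)]
  rw [← Finset.prod_filter_mul_prod_filter_not univ (fun i => s i = true)]
  have h1 : ∏ i ∈ univ.filter (fun i => s i = true), (if s i = true then (1:ℝ) else 2)
      = ∏ _i ∈ univ.filter (fun i => s i = true), (1:ℝ) :=
    Finset.prod_congr rfl (fun i hi => by simp at hi; simp [hi])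
  have h2 : ∏ i ∈ univ.filter (fun i => ¬ (s i = true)), (if s i = true then (1:ℝ) else 2)
      = ∏ _i ∈ univ.filter (fun i => ¬ (s i = true)), (2:ℝ) :=
    Finset.prod_congr rfl (fun i hi => by simp at hi; simp [hi])
  rw [h1, h2]
  simp

lemma key_case (cs nn : ℕ) (E : ℤ) (hE : Even E) :
    |(1/2^nn : ℝ) * (2^cs * E - 2*2^cs)| - |(1/2^nn : ℝ) * (2^cs * E)|
      = (2^cs / 2^nn) * (if E ≤ 0 then 2 else -2) := by
  have hc : (0:ℝ) < 2^cs / 2^nn := by positivity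
  have hk := abs_key E hE (2^cs / 2^nn) hc
  have e1 : (1/2^nn : ℝ) * (2^cs * E - 2*2^cs) = (2^cs / 2^nn) * E - 2 * (2^cs / 2^nn) := by ring
  have e2 : (1/2^nn : ℝ) * (2^cs * E) = (2^cs / 2^nn) * E := by ring
  rw [e1, e2, hk]
  split_ifs <;> ring

lemma efun_le_iff (m : ℕ) (c : ℤ) : Efun m c ≤ 0 ↔ c ≤ 0 := by
  constructor
  · intro h
    by_contra hc
    exact absurd h (not_le.2 (Efun_pos m c (by omega)))
  · intro h
    rcases eq_or_lt_of_le h with h' | h'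
    · rw [h', Efun_zero_arg]
    · exact (Efun_neg m c (by omega)).le

lemma card_fun_bool (n : ℕ) : Fintype.card (Fin n → Bool) = 2 ^ n := by
  rw [Fintype.card_fun]; simp

lemma per_s (n : ℕ) (hodd : Odd n) (hn : 3 ≤ n) (s : Fin n → Bool) :
    ((1 / 2 ^ n : ℝ) * ∑ x : Fin n → Bool,
        |(1 / 2 ^ n : ℝ) * ∑ z : Fin n → Bool, gfun n (fun i => if s i then x i else z i)|)
      - ((1 / 2 ^ n : ℝ) * ∑ x : Fin n → Bool,
        |(1 / 2 ^ n : ℝ) * ∑ z : Fin n → Bool, maj n (fun i => if s i then x i else z i)|)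
      = (4 / 2 ^ n) *
          (if s = (fun _ => false) ∨ s = (fun _ => true) then (0:ℝ)
           else if (∑ i ∈ univ.filter (fun i => s i = true), ichi (eVec n i)) ≤ 0 then 1 else -1) := by
  classical
  by_cases htop : s = (fun _ => true)
  · -- top case
    rw [if_pos (Or.inr htop), mul_zero]
    have hsel : ∀ (x z : Fin n → Bool), (fun i => if s i then x i else z i) = x := by
      intro x z; funext i; rw [show s i = true from by rw [htop]]; simp
    have habs : ∀ f : (Fin n → Bool) → ℝ, ∀ x : Fin n → Bool,
        |(1 / 2 ^ n : ℝ) * ∑ z : Fin n → Bool, f (fun i => if s i then x i else z i)| = |f x| := by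
      intro f x
      rw [Finset.sum_congr rfl (fun z _ => by rw [hsel x z])]
      rw [Finset.sum_const, Finset.card_univ, card_fun_bool, nsmul_eq_mul]
      rw [abs_mul, abs_mul]
      push_cast
      rw [abs_of_pos (by positivity : (0:ℝ) < 1/2^n), abs_of_pos (by positivity : (0:ℝ) < (2:ℝ)^n)]
      rw [← mul_assoc]
      rw [show (1/2^n : ℝ) * 2^n = 1 by field_simp]
      ring
    rw [Finset.sum_congr rfl (fun x _ => habs (gfun n) x),
      Finset.sum_congr rfl (fun x _ => habs (maj n) x)]
    rw [Finset.sum_congr rfl (fun x _ => show |gfun n x| = |maj n x| by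
      rw [gfun]; split_ifs with h; exact abs_neg _; rfl)]
    ring
  by_cases hbot : s = (fun _ => false)
  · rw [if_pos (Or.inl hbot), mul_zero]
    have hag : ∀ x : Fin n → Bool, ∀ y : Fin n → Bool, (∀ i, s i = true → x i = y i) := by
      intro x y i hi; rw [hbot] at hi; simp at hi
    have heq : ∀ x : Fin n → Bool,
        (∑ z : Fin n → Bool, gfun n (fun i => if s i then x i else z i))
          = (∑ z : Fin n → Bool, maj n (fun i => if s i then x i else z i)) := by
      intro x
      rw [gsum_eq n hodd hn s x, if_pos (hag x (eVec n)), if_pos (hag x _)]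
      ring
    rw [Finset.sum_congr rfl (fun x _ => by rw [heq x])]
    ring
  -- main case
  rw [if_neg (by tauto)]
  set cs := (univ.filter (fun i => s i = true)).card with hcs
  set m := Fintype.card {i : Fin n // ¬ (s i = true)} with hm
  set c := ∑ i ∈ univ.filter (fun i => s i = true), ichi (eVec n i) with hcdef
  have hmcard : m = (univ.filter (fun i => ¬ (s i = true))).card := Fintype.card_subtype _
  have hmn : cs + m = n := by
    rw [hcs, hmcard]
    have := Finset.card_filter_add_card_filter_not
      (s := (univ : Finset (Fin n))) (p := fun i => s i = true)
    simpa using this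
  have hm1 : 1 ≤ m := by
    by_contra h
    apply htop
    have h0 : m = 0 := by omega
    rw [hmcard] at h0
    rw [Finset.card_eq_zero, Finset.filter_eq_empty_iff] at h0
    funext i
    have := h0 (Finset.mem_univ i)
    simpa using this
  have hcsne : s ≠ (fun _ => false) := hbot
  have hex : ∃ i₀, s i₀ = true := by
    by_contra h
    push_neg at h
    exact hbot (funext (fun i => by simpa using h i))
  have hpar : Odd (c + (m:ℤ)) := by
    have h1 : c % 2 = (cs:ℤ) % 2 := by
      rw [hcdef, Finset.sum_int_mod,
        Finset.sum_congr rfl (fun i _ => show ichi (eVec n i) % 2 = 1 from by cases eVec n i <;> simp [ichi]),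
        Finset.sum_const, hcs]
      simp
    obtain ⟨k, hk⟩ := hodd
    have hn2 : ((cs:ℤ) + m) = n := by exact_mod_cast congrArg Nat.cast hmn
    rw [Int.odd_iff]
    omega
  have hEe : Even (Efun m c) := Efun_even m c hm1 hpar
  -- per-x computation
  have hTx : ∀ x : Fin n → Bool,
      |(1 / 2 ^ n : ℝ) * ∑ z : Fin n → Bool, gfun n (fun i => if s i then x i else z i)|
        - |(1 / 2 ^ n : ℝ) * ∑ z : Fin n → Bool, maj n (fun i => if s i then x i else z i)|
      = ((if (∀ i, s i = true → x i = eVec n i) then (1:ℝ) else 0)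
          + (if (∀ i, s i = true → x i = !(eVec n i)) then (1:ℝ) else 0))
        * ((2^cs / 2^n) * (if Efun m c ≤ 0 then 2 else -2)) := by
    intro x
    by_cases hae : ∀ i, s i = true → x i = eVec n i
    · have hnae : ¬ (∀ i, s i = true → x i = !(eVec n i)) := by
        intro h'
        obtain ⟨i₀, hi₀⟩ := hex
        have := (hae i₀ hi₀).symm.trans (h' i₀ hi₀)
        simp at this
      have hcx : (∑ i ∈ univ.filter (fun i => s i = true), ichi (x i)) = c := by
        rw [hcdef]
        exact Finset.sum_congr rfl (fun i hi => by rw [hae i (by simpa using hi)])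
      rw [if_pos hae, if_neg hnae, gsum_eq n hodd hn s x, if_pos hae, if_neg hnae,
        sum_maj_sel n s x, hcx, ← hcs, ← hm]
      rw [show ((2:ℝ)^cs * (Efun m c : ℝ) + (-2) * 2^cs + 2 * 0)
          = (2^cs * (Efun m c : ℝ) - 2 * 2^cs) by ring]
      rw [key_case cs n (Efun m c) hEe]
      ring
    · by_cases hae2 : ∀ i, s i = true → x i = !(eVec n i)
      · have hcx : (∑ i ∈ univ.filter (fun i => s i = true), ichi (x i)) = -c := by
          rw [hcdef, ← Finset.sum_neg_distrib]
          exact Finset.sum_congr rfl (fun i hi => by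
            rw [hae2 i (by simpa using hi), ichi_not])
        rw [if_neg hae, if_pos hae2, gsum_eq n hodd hn s x, if_neg hae, if_pos hae2,
          sum_maj_sel n s x, hcx, ← hcs, ← hm, Efun_antisym]
        push_cast
        rw [show ((2:ℝ)^cs * (-(Efun m c : ℝ)) + (-2) * 0 + 2 * 2^cs)
            = -(2^cs * (Efun m c : ℝ) - 2 * 2^cs) by ring]
        rw [mul_neg, abs_neg]
        rw [show ((2:ℝ)^cs * (-(Efun m c : ℝ))) = -(2^cs * (Efun m c : ℝ)) by ring]
        rw [mul_neg, abs_neg]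
        rw [key_case cs n (Efun m c) hEe]
        ring
      · rw [if_neg hae, if_neg hae2, gsum_eq n hodd hn s x, if_neg hae, if_neg hae2]
        ring_nf
  -- sum over x
  rw [← mul_sub, ← Finset.sum_sub_distrib]
  rw [Finset.sum_congr rfl (fun x _ => hTx x)]
  rw [← Finset.sum_mul]
  rw [Finset.sum_add_distrib]
  rw [count_agree n s (eVec n), count_agree n s (fun i => !(eVec n i)), ← hmcard]
  have hiff : (Efun m c ≤ 0) ↔ (c ≤ 0) := efun_le_iff m c
  have hpow : (2:ℝ)^cs * 2^m = 2^n := by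
    rw [← pow_add]; rw [hmn]
  have h2n : (2:ℝ)^n ≠ 0 := by positivity
  by_cases hc0 : c ≤ 0
  · rw [if_pos hc0, if_pos (hiff.2 hc0)]
    field_simp
    linear_combination 4 * hpow
  · rw [if_neg hc0, if_neg (fun h => hc0 (hiff.1 h))]
    field_simp
    linear_combination (-4) * hpow

lemma pmf_sum_one (m : ℕ) (q : ℝ) : ∑ k ∈ range (m+1), binomPMF m q k = 1 := by
  have h := add_pow q (1-q) m
  rw [show q + (1-q) = 1 by ring, one_pow] at h
  rw [show (∑ k ∈ range (m+1), binomPMF m q k)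
      = ∑ k ∈ range (m+1), q ^ k * (1-q) ^ (m-k) * (m.choose k : ℝ) from
    Finset.sum_congr rfl (fun k _ => by rw [binomPMF]; ring), ← h]

lemma pmf_top (h : ℕ) (q : ℝ) : binomPMF h q (h+1) = 0 := by
  rw [binomPMF, Nat.choose_succ_self]; simp

lemma pascal_pmf (h j : ℕ) (hj : j ≤ h) (q : ℝ) :
    binomPMF (h+1) q (j+1) = q * binomPMF h q j + (1-q) * binomPMF h q (j+1) := by
  rcases eq_or_lt_of_le hj with hje | hjl
  · subst hje
    rw [pmf_top, binomPMF, binomPMF, Nat.choose_self, Nat.choose_self]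
    simp
    ring
  · rw [binomPMF, binomPMF, binomPMF, Nat.choose_succ_succ]
    have e1 : h + 1 - (j+1) = h - j := by omega
    have e2 : h - (j+1) + 1 = h - j := by omega
    rw [e1, show h - (j+1) = h - j - 1 by omega]
    have e3 : (1-q) ^ (h - j) = (1-q) * (1-q) ^ (h - j - 1) := by
      rw [← pow_succ']
      congr 1
      omega
    push_cast
    rw [e3]
    ring

lemma triangle (N : ℕ) (f : ℕ → ℕ → ℝ) :
    ∑ j ∈ range N, ∑ k ∈ range N, f j k
      = (∑ j ∈ range N, ∑ k ∈ range j, (f j k + f k j)) + ∑ j ∈ range N, f j j := by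
  induction N with
  | zero => simp
  | succ N ih =>
    have l1 : ∑ j ∈ range (N+1), ∑ k ∈ range (N+1), f j k
        = ((∑ j ∈ range N, ∑ k ∈ range N, f j k) + (∑ j ∈ range N, f j N))
          + ((∑ k ∈ range N, f N k) + f N N) := by
      rw [Finset.sum_range_succ]
      congr 1
      · rw [Finset.sum_congr rfl (fun j _ => Finset.sum_range_succ (f j) N),
          Finset.sum_add_distrib]
      · exact Finset.sum_range_succ _ _
    rw [l1, ih]
    rw [Finset.sum_range_succ (fun j => ∑ k ∈ range j, (f j k + f k j)),
      Finset.sum_range_succ (fun j => f j j), Finset.sum_add_distrib]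
    ring

lemma X_eq (h : ℕ) (q : ℝ) :
    (∑ j ∈ range (h+2), ∑ k ∈ range (h+1),
        binomPMF (h+1) q j * binomPMF h q k * (if (j:ℤ) - k ≤ 0 then (1:ℝ) else -1))
      = (1 - 2*q) * binomCollision h q := by
  set p : ℕ → ℝ := binomPMF h q with hp
  set p' : ℕ → ℝ := binomPMF (h+1) q with hp'
  set C := binomCollision h q with hC
  set S : ℕ → ℝ := fun j => ∑ k ∈ range (j+1), p k with hS
  set P := ∑ j ∈ range (h+1), p j * (∑ k ∈ range j, p k) with hP
  -- rewrite indicator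
  have hind : ∀ j k : ℕ, (if (j:ℤ) - k ≤ 0 then (1:ℝ) else -1)
      = 1 - 2 * (if k < j then (1:ℝ) else 0) := by
    intro j k
    by_cases hjk : k < j
    · rw [if_neg (by push_cast; omega), if_pos hjk]; norm_num
    · rw [if_pos (by push_cast; omega), if_neg hjk]; norm_num
  have expand : ∀ j k : ℕ, p' j * p k * (if (j:ℤ) - k ≤ 0 then (1:ℝ) else -1)
      = p' j * p k - 2 * (p' j * p k * (if k < j then (1:ℝ) else 0)) := by
    intro j k; rw [hind]; ring
  rw [Finset.sum_congr rfl (fun j _ => Finset.sum_congr rfl (fun k _ => expand j k))]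
  rw [Finset.sum_congr rfl (fun j _ => Finset.sum_sub_distrib _ _), Finset.sum_sub_distrib]
  -- total mass
  have htot : ∑ j ∈ range (h+2), ∑ k ∈ range (h+1), p' j * p k = 1 := by
    rw [Finset.sum_congr rfl (fun j _ => (Finset.mul_sum _ _ _).symm)]
    rw [← Finset.sum_mul, pmf_sum_one, pmf_sum_one]
    norm_num
  rw [htot]
  rw [show (∑ j ∈ range (h+2), ∑ k ∈ range (h+1), 2 * (p' j * p k * (if k < j then (1:ℝ) else 0)))
      = 2 * ∑ j ∈ range (h+2), ∑ k ∈ range (h+1), p' j * p k * (if k < j then (1:ℝ) else 0) by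
    rw [Finset.mul_sum]; exact Finset.sum_congr rfl (fun j _ => by rw [Finset.mul_sum])]
  -- Q
  have hinner : ∀ j, j < h + 1 →
      (∑ k ∈ range (h+1), p' (j+1) * p k * (if k < j+1 then (1:ℝ) else 0)) = p' (j+1) * S j := by
    intro j hj
    rw [hS, Finset.mul_sum]
    rw [← Finset.sum_subset (Finset.range_subset_range.2 (by omega : j+1 ≤ h+1))
      (by intro k _ hk; simp at hk; rw [if_neg (by omega), mul_zero])]
    apply Finset.sum_congr rfl
    intro k hk
    simp at hk
    rw [if_pos (by omega), mul_one]
  have hQ : (∑ j ∈ range (h+2), ∑ k ∈ range (h+1), p' j * p k * (if k < j then (1:ℝ) else 0))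
      = ∑ j ∈ range (h+1), p' (j+1) * S j := by
    rw [Finset.sum_range_succ' (fun j => ∑ k ∈ range (h+1), p' j * p k * (if k < j then (1:ℝ) else 0)) (h+1)]
    rw [show (∑ k ∈ range (h+1), p' 0 * p k * (if k < 0 then (1:ℝ) else 0)) = 0 by
      apply Finset.sum_eq_zero; intro k _; rw [if_neg (by omega), mul_zero]]
    rw [add_zero]
    apply Finset.sum_congr rfl
    intro j hj
    simp at hj
    exact hinner j (by omega)
  rw [hQ]
  -- Pascal split
  have hsplit : (∑ j ∈ range (h+1), p' (j+1) * S j)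
      = q * (∑ j ∈ range (h+1), p j * S j) + (1-q) * (∑ j ∈ range (h+1), p (j+1) * S j) := by
    rw [Finset.mul_sum, Finset.mul_sum, ← Finset.sum_add_distrib]
    apply Finset.sum_congr rfl
    intro j hj
    simp at hj
    rw [hp', hp, pascal_pmf h j (by omega) q]
    ring
  -- U = P + C
  have hU : (∑ j ∈ range (h+1), p j * S j) = P + C := by
    rw [hP, hC, binomCollision, ← Finset.sum_add_distrib]
    apply Finset.sum_congr rfl
    intro j _
    simp only [hS]
    rw [show (∑ k ∈ range (j+1), p k) = (∑ k ∈ range j, p k) + p j from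
      Finset.sum_range_succ _ _, ← hp]
    ring
  -- V = P
  have hV : (∑ j ∈ range (h+1), p (j+1) * S j) = P := by
    rw [Finset.sum_range_succ (fun j => p (j+1) * S j) h,
      show p (h+1) = 0 from pmf_top h q, zero_mul, add_zero]
    rw [hP, Finset.sum_range_succ' (fun j => p j * (∑ k ∈ range j, p k)) h]
    rw [show p 0 * (∑ k ∈ range 0, p k) = 0 by simp, add_zero]
  -- 2P + C = 1
  have hPC : 2 * P + C = 1 := by
    have ht := triangle (h+1) (fun j k => p j * p k)
    have hmass : ∑ j ∈ range (h+1), ∑ k ∈ range (h+1), p j * p k = 1 := by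
      rw [Finset.sum_congr rfl (fun j _ => (Finset.mul_sum _ _ _).symm)]
      rw [← Finset.sum_mul, hp, pmf_sum_one]
      norm_num
    rw [hmass] at ht
    have hdiag : ∑ j ∈ range (h+1), p j * p j = C := by
      rw [hC, binomCollision]
      exact Finset.sum_congr rfl (fun j _ => by rw [← hp]; ring)
    rw [hdiag] at ht
    have hoff : (∑ j ∈ range (h+1), ∑ k ∈ range j, (p j * p k + p k * p j)) = 2 * P := by
      rw [hP, Finset.mul_sum]
      apply Finset.sum_congr rfl
      intro j _
      rw [Finset.mul_sum, Finset.mul_sum]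
      apply Finset.sum_congr rfl
      intro k _
      ring
    rw [hoff] at ht
    linarith
  rw [hsplit, hU, hV]
  linarith [hPC]

lemma bin_lemma (α : Type*) [Fintype α] [DecidableEq α] (q : ℝ) (G : ℕ → ℝ) :
    (∑ t : α → Bool, (∏ i, if t i then q else 1 - q) * G ((univ.filter (fun i => t i = true)).card))
      = ∑ k ∈ Finset.range (Fintype.card α + 1), binomPMF (Fintype.card α) q k * G k := by
  classical
  have hw : ∀ t : α → Bool, (∏ i, if t i then q else 1 - q)
      = q ^ ((univ.filter (fun i => t i = true)).card)
        * (1-q) ^ (Fintype.card α - (univ.filter (fun i => t i = true)).card) := by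
    intro t
    rw [← Finset.prod_filter_mul_prod_filter_not univ (fun i => t i = true)]
    have h1 : ∏ i ∈ univ.filter (fun i => t i = true), (if t i then q else 1 - q)
        = ∏ _i ∈ univ.filter (fun i => t i = true), q :=
      Finset.prod_congr rfl (fun i hi => by simp at hi; simp [hi])
    have h2 : ∏ i ∈ univ.filter (fun i => ¬ (t i = true)), (if t i then q else 1 - q)
        = ∏ _i ∈ univ.filter (fun i => ¬ (t i = true)), (1-q) :=
      Finset.prod_congr rfl (fun i hi => by simp at hi; simp [hi])
    rw [h1, h2, Finset.prod_const, Finset.prod_const]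
    congr 2
    have := Finset.card_filter_add_card_filter_not
      (s := (univ : Finset α)) (p := fun i => t i = true)
    simp at this ⊢
    omega
  rw [Finset.sum_congr rfl (fun t _ => by rw [hw t])]
  -- reindex over Finsets
  have hbij : Function.Bijective (fun (t : α → Bool) => univ.filter (fun i => t i = true)) := by
    constructor
    · intro t t' htt
      have heq : (filter (fun j => t j = true) univ) = (filter (fun j => t' j = true) univ) := htt
      funext i
      have hmem := congrArg (fun (u : Finset α) => i ∈ u) heq
      simp at hmem
      cases ht : t i <;> cases ht' : t' i <;> simp_all
    · intro u
      refine ⟨fun i => decide (i ∈ u), ?_⟩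
      ext i
      simp
  rw [Fintype.sum_bijective _ hbij _
    (fun u => q ^ u.card * (1-q) ^ (Fintype.card α - u.card) * G u.card) (fun t => rfl)]
  rw [show (univ : Finset (Finset α)) = (univ : Finset α).powerset from Finset.powerset_univ.symm]
  rw [Finset.sum_powerset]
  rw [show (univ : Finset α).card = Fintype.card α from rfl]
  apply Finset.sum_congr rfl
  intro k hk
  simp at hk
  have hcards : ∀ u ∈ Finset.powersetCard k (univ : Finset α),
      q ^ u.card * (1-q) ^ (Fintype.card α - u.card) * G u.card
        = q ^ k * (1-q) ^ (Fintype.card α - k) * G k := by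
    intro u hu
    rw [(Finset.mem_powersetCard.1 hu).2]
  rw [Finset.sum_congr rfl hcards, Finset.sum_const, Finset.card_powersetCard,
    show (univ : Finset α).card = Fintype.card α from rfl, nsmul_eq_mul, binomPMF]
  ring

lemma card_eVec_true (n : ℕ) (hodd : Odd n) (hn : 3 ≤ n) :
    (univ.filter (fun i : Fin n => eVec n i = true)).card = (n-1)/2 + 1 := by
  obtain ⟨h, hh⟩ := hodd
  have hdiv : (n - 1) / 2 = h := by omega
  rw [Finset.card_filter]
  calc ∑ i : Fin n, (if eVec n i = true then 1 else 0)
      = ∑ i : Fin n, (fun j => if j < h + 1 then 1 else 0) (i:ℕ) :=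
        Finset.sum_congr rfl (fun i _ => by simp [eVec, hdiv])
    _ = ∑ j ∈ range n, (fun j => if j < h + 1 then 1 else 0) j := by
        exact Fin.sum_univ_eq_sum_range (fun j => if j < h + 1 then 1 else 0) n
    _ = (n-1)/2 + 1 := by
        rw [Finset.range_eq_Ico,
          ← Finset.sum_Ico_consecutive _ (Nat.zero_le (h+1)) (by omega : h+1 ≤ n)]
        have h1 : (∑ j ∈ Finset.Ico 0 (h+1), if j < h+1 then 1 else 0)
            = ∑ _j ∈ Finset.Ico 0 (h+1), 1 :=
          Finset.sum_congr rfl (fun j hj => by simp at hj; simp [hj])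
        have h2 : (∑ j ∈ Finset.Ico (h+1) n, if j < h+1 then 1 else 0)
            = ∑ _j ∈ Finset.Ico (h+1) n, 0 :=
          Finset.sum_congr rfl (fun j hj => by simp at hj; rw [if_neg (by omega)])
        rw [h1, h2]
        simp [Nat.card_Ico]
        omega

lemma card_eVec_false (n : ℕ) (hodd : Odd n) (hn : 3 ≤ n) :
    (univ.filter (fun i : Fin n => ¬ (eVec n i = true))).card = (n-1)/2 := by
  have h1 := card_eVec_true n hodd hn
  have h2 := Finset.card_filter_add_card_filter_not
    (s := (univ : Finset (Fin n))) (p := fun i : Fin n => eVec n i = true)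
  simp only [Finset.card_univ, Fintype.card_fin] at h2
  obtain ⟨k, hk⟩ := hodd
  omega

lemma split_sum (n : ℕ) (hodd : Odd n) (hn : 3 ≤ n) (q : ℝ) (F : ℤ → ℝ) :
    (∑ s : Fin n → Bool, (∏ i, if s i then q else 1 - q) *
        F (∑ i ∈ univ.filter (fun i => s i = true), ichi (eVec n i)))
      = ∑ j ∈ range ((n-1)/2 + 2), ∑ k ∈ range ((n-1)/2 + 1),
          binomPMF ((n-1)/2 + 1) q j * binomPMF ((n-1)/2) q k * F ((j:ℤ) - k) := by
  classical
  have hc : ∀ s : Fin n → Bool,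
      (∑ i ∈ univ.filter (fun i => s i = true), ichi (eVec n i))
        = (((univ.filter (fun i : {i : Fin n // eVec n i = true} => s i.val = true)).card : ℤ)
          - ((univ.filter (fun i : {i : Fin n // ¬ (eVec n i = true)} => s i.val = true)).card : ℤ)) := by
    intro s
    rw [Finset.sum_filter]
    rw [← Fintype.sum_subtype_add_sum_subtype (fun i => eVec n i = true)
      (fun i => if s i = true then ichi (eVec n i) else 0)]
    congr 1
    · rw [Finset.sum_congr rfl (fun (i : {i : Fin n // eVec n i = true}) _ =>
        show (if s i.val = true then ichi (eVec n i.val) else 0) = (if s i.val = true then 1 else 0) from by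
          rw [i.prop]; rfl)]
      rw [Finset.sum_boole]
    · rw [Finset.sum_congr rfl (fun (i : {i : Fin n // ¬ (eVec n i = true)}) _ =>
        show (if s i.val = true then ichi (eVec n i.val) else 0) = -(if s i.val = true then 1 else 0) from by
          rw [show eVec n i.val = false from by have := i.prop; simp at this; exact this]
          split_ifs <;> simp [ichi])]
      rw [Finset.sum_neg_distrib, Finset.sum_boole]
  have hw : ∀ s : Fin n → Bool, (∏ i, if s i then q else 1 - q)
      = (∏ i : {i : Fin n // eVec n i = true}, if s i.val then q else 1 - q)
        * (∏ i : {i : Fin n // ¬ (eVec n i = true)}, if s i.val then q else 1 - q) :=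
    fun s => (Fintype.prod_subtype_mul_prod_subtype (fun i => eVec n i = true)
      (fun i => if s i then q else 1 - q)).symm
  rw [Fintype.sum_equiv (Equiv.piEquivPiSubtypeProd (fun i : Fin n => eVec n i = true) (fun _ => Bool))
    _ (fun uv => ((∏ i : {i : Fin n // eVec n i = true}, if uv.1 i then q else 1 - q)
        * (∏ i : {i : Fin n // ¬ (eVec n i = true)}, if uv.2 i then q else 1 - q))
        * F (((univ.filter (fun i : {i : Fin n // eVec n i = true} => uv.1 i = true)).card : ℤ)
          - ((univ.filter (fun i : {i : Fin n // ¬ (eVec n i = true)} => uv.2 i = true)).card : ℤ)))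
    (by intro s; rw [hw s, hc s]; rfl)]
  rw [Fintype.sum_prod_type]
  -- inner bin_lemma
  have hinner : ∀ u : {i : Fin n // eVec n i = true} → Bool,
      (∑ v : {i : Fin n // ¬ (eVec n i = true)} → Bool,
        ((∏ i, if u i then q else 1 - q) * (∏ i, if v i then q else 1 - q))
          * F (((univ.filter (fun i => u i = true)).card : ℤ)
            - ((univ.filter (fun i => v i = true)).card : ℤ)))
      = (∏ i, if u i then q else 1 - q) *
          ∑ k ∈ range ((n-1)/2 + 1), binomPMF ((n-1)/2) q k
            * F (((univ.filter (fun i => u i = true)).card : ℤ) - k) := by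
    intro u
    rw [Finset.sum_congr rfl (fun v _ => show
        ((∏ i, if u i then q else 1 - q) * (∏ i, if v i then q else 1 - q))
          * F (((univ.filter (fun i => u i = true)).card : ℤ)
            - ((univ.filter (fun i => v i = true)).card : ℤ))
        = (∏ i, if v i then q else 1 - q) *
            ((fun k => (∏ i, if u i then q else 1 - q) *
              F (((univ.filter (fun i => u i = true)).card : ℤ) - k))
              ((univ.filter (fun i => v i = true)).card) : ℝ) from by ring)]
    rw [bin_lemma _ q (fun k => (∏ i, if u i then q else 1 - q) *
      F (((univ.filter (fun i => u i = true)).card : ℤ) - k))]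
    rw [Fintype.card_subtype, card_eVec_false n hodd hn, Finset.mul_sum]
    apply Finset.sum_congr rfl
    intro k _
    ring
  rw [Finset.sum_congr rfl (fun u _ => hinner u)]
  -- outer bin_lemma
  rw [Finset.sum_congr rfl (fun u _ => show
      (∏ i, if u i then q else 1 - q) *
          (∑ k ∈ range ((n-1)/2 + 1), binomPMF ((n-1)/2) q k
            * F (((univ.filter (fun i => u i = true)).card : ℤ) - k))
        = (∏ i, if u i then q else 1 - q) *
          ((fun j => ∑ k ∈ range ((n-1)/2 + 1), binomPMF ((n-1)/2) q k * F ((j:ℤ) - k))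
            ((univ.filter (fun i => u i = true)).card) : ℝ) from rfl)]
  rw [bin_lemma _ q (fun j => ∑ k ∈ range ((n-1)/2 + 1),
    binomPMF ((n-1)/2) q k * F ((j:ℤ) - k))]
  rw [Fintype.card_subtype, card_eVec_true n hodd hn]
  rw [show (n-1)/2 + 1 + 1 = (n-1)/2 + 2 from rfl]
  apply Finset.sum_congr rfl
  intro j _
  rw [Finset.mul_sum]
  apply Finset.sum_congr rfl
  intro k _
  ring


theorem stmt4 (n : ℕ) (hodd : Odd n) (hn : 3 ≤ n) (q : ℝ) (hq0 : 0 < q) (hq1 : q < 1) :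
    (2 : ℝ) ^ (n - 2) * (phi n q (gfun n) - phi n q (maj n))
      = (1 - 2 * q) * binomCollision ((n - 1) / 2) q + q ^ n - (1 - q) ^ n := by
  classical
  have hbt : (fun _ : Fin n => false) ≠ (fun _ : Fin n => true) := by
    intro hcon
    have := congrFun hcon ⟨0, by omega⟩
    simp at this
  have hdiff : phi n q (gfun n) - phi n q (maj n)
      = ∑ s : Fin n → Bool, (∏ i, if s i then q else 1 - q) *
          ((4 / 2^n) * (if s = (fun _ => false) ∨ s = (fun _ => true) then (0:ℝ)
            else if (∑ i ∈ univ.filter (fun i => s i = true), ichi (eVec n i)) ≤ 0 then 1 else -1)) := by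
    rw [phi, phi, ← Finset.sum_sub_distrib]
    apply Finset.sum_congr rfl
    intro s _
    rw [← mul_sub, per_s n hodd hn s]
  rw [hdiff, Finset.mul_sum]
  have hpow1 : (2:ℝ)^(n-2) * (4 / 2^n) = 1 := by
    have h1 : (2:ℝ)^(n-2) * 4 = 2^n := by
      rw [show (4:ℝ) = 2^2 by norm_num, ← pow_add, show n - 2 + 2 = n by omega]
    have h2 : (2:ℝ)^n ≠ 0 := by positivity
    field_simp
    linarith [h1]
  have hstep : ∀ s : Fin n → Bool,
      (2:ℝ)^(n-2) * ((∏ i, if s i then q else 1 - q) *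
          ((4 / 2^n) * (if s = (fun _ => false) ∨ s = (fun _ => true) then (0:ℝ)
            else if (∑ i ∈ univ.filter (fun i => s i = true), ichi (eVec n i)) ≤ 0 then 1 else -1)))
      = (∏ i, if s i then q else 1 - q) *
          (if s = (fun _ => false) ∨ s = (fun _ => true) then (0:ℝ)
            else if (∑ i ∈ univ.filter (fun i => s i = true), ichi (eVec n i)) ≤ 0 then 1 else -1) := by
    intro s
    set w := (∏ i, if s i then q else 1 - q) with hwdef
    set T := (if s = (fun _ => false) ∨ s = (fun _ => true) then (0:ℝ)
            else if (∑ i ∈ univ.filter (fun i => s i = true), ichi (eVec n i)) ≤ 0 then 1 else -1) with hT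
    calc (2:ℝ)^(n-2) * (w * ((4 / 2^n) * T)) = ((2:ℝ)^(n-2) * (4 / 2^n)) * (w * T) := by ring
      _ = w * T := by rw [hpow1]; ring
  rw [Finset.sum_congr rfl (fun s _ => hstep s)]
  -- decompose the indicator
  have hTd : ∀ s : Fin n → Bool,
      (if s = (fun _ => false) ∨ s = (fun _ => true) then (0:ℝ)
        else if (∑ i ∈ univ.filter (fun i => s i = true), ichi (eVec n i)) ≤ 0 then 1 else -1)
      = (if (∑ i ∈ univ.filter (fun i => s i = true), ichi (eVec n i)) ≤ 0 then (1:ℝ) else -1)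
        + (if s = (fun _ => false) then (-1:ℝ) else 0)
        + (if s = (fun _ => true) then (1:ℝ) else 0) := by
    intro s
    by_cases hb : s = (fun _ => false)
    · subst hb
      rw [if_pos (Or.inl rfl), if_pos rfl, if_neg hbt]
      rw [if_pos (by
        rw [show (univ.filter (fun i : Fin n => (fun _ : Fin n => false) i = true)) = ∅ by
          apply Finset.filter_false_of_mem; intro i _; simp]
        simp)]
      norm_num
    · by_cases ht : s = (fun _ => true)
      · subst ht
        rw [if_pos (Or.inr rfl), if_neg hb, if_pos rfl]
        rw [if_neg (by
          rw [show (univ.filter (fun i : Fin n => (fun _ : Fin n => true) i = true)) = univ by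
            apply Finset.filter_true_of_mem; intro i _; simp]
          rw [isum_eVec n hodd hn]
          omega)]
        norm_num
      · rw [if_neg (by tauto), if_neg hb, if_neg ht]
        ring
  rw [Finset.sum_congr rfl (fun s _ => by rw [hTd s, mul_add, mul_add])]
  rw [Finset.sum_add_distrib, Finset.sum_add_distrib]
  -- first part via split_sum and X_eq
  have hX : (∑ s : Fin n → Bool, (∏ i, if s i then q else 1 - q) *
      (if (∑ i ∈ univ.filter (fun i => s i = true), ichi (eVec n i)) ≤ 0 then (1:ℝ) else -1))
      = (1 - 2*q) * binomCollision ((n-1)/2) q := by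
    rw [split_sum n hodd hn q (fun t => if t ≤ 0 then (1:ℝ) else -1)]
    exact X_eq ((n-1)/2) q
  -- bot part
  have hbotsum : (∑ s : Fin n → Bool, (∏ i, if s i then q else 1 - q) *
      (if s = (fun _ => false) then (-1:ℝ) else 0)) = -(1-q)^n := by
    rw [Finset.sum_congr rfl (fun s _ => show
      (∏ i, if s i then q else 1 - q) * (if s = (fun _ => false) then (-1:ℝ) else 0)
        = (if s = (fun _ : Fin n => false) then (fun s : Fin n → Bool => -(∏ i, if s i then q else 1 - q)) s else 0) from by
      split_ifs <;> ring)]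
    rw [Finset.sum_ite_eq' univ (fun _ : Fin n => false)
      (fun s : Fin n → Bool => -(∏ i, if s i then q else 1 - q))]
    rw [if_pos (Finset.mem_univ _)]
    simp
  -- top part
  have htopsum : (∑ s : Fin n → Bool, (∏ i, if s i then q else 1 - q) *
      (if s = (fun _ => true) then (1:ℝ) else 0)) = q^n := by
    rw [Finset.sum_congr rfl (fun s _ => show
      (∏ i, if s i then q else 1 - q) * (if s = (fun _ => true) then (1:ℝ) else 0)
        = (if s = (fun _ : Fin n => true) then (fun s : Fin n → Bool => (∏ i, if s i then q else 1 - q)) s else 0) from by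
      split_ifs <;> ring)]
    rw [Finset.sum_ite_eq' univ (fun _ : Fin n => true)
      (fun s : Fin n → Bool => (∏ i, if s i then q else 1 - q))]
    rw [if_pos (Finset.mem_univ _)]
    simp
  rw [hX, hbotsum, htopsum]
  ring
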